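/- If dim_{F_p} T < σ₀ for an F_p-subspace T ⊂ N, then the map T ⊗_{F_p} k → (N ⊗ k)/φ(K) induced by the quotient is injective, and even the composite T ⊗ k → (N ⊗ k)/(K + φ(K)) is injective. In particular (taking T a line), for every nonzero v ∈ N the image of v ⊗ 1 in (N ⊗ k)/φ(K) is nonzero, and if σ₀ ≥ 2 its image in (N ⊗ k)/(K + φ(K)) is also nonzero. -/

import Mathlib

open Module Submodule Function

/-- On a perfect field the Frobenius is surjective, so images of submodules under
Frobenius-semilinear maps are again submodules. -/
instance frobSurj (k : Type*) [Field k] (p : ℕ) [Fact p.Prime] [CharP k p] [PerfectRing k p] :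
    RingHomSurjective (frobenius k p) := ⟨surjective_frobenius k p⟩


variable {k : Type*} [Field k] {p : ℕ} [Fact p.Prime] [CharP k p] [PerfectRing k p]
  {V : Type*} [AddCommGroup V] [Module k V]

/-- `φ^i(K)`, the `i`-th iterated image of `K` under the `p`-semilinear map `φ`. -/
def iterMap (φ : V →ₛₗ[frobenius k p] V) (K : Submodule k V) (i : ℕ) : Submodule k V :=
  (Submodule.map φ)^[i] K

/-- `φ^{-i}(K)`, the `i`-th iterated preimage of `K` under `φ`. -/
def iterComap (φ : V →ₛₗ[frobenius k p] V) (K : Submodule k V) (i : ℕ) : Submodule k V :=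
  (Submodule.comap φ)^[i] K

/-- The smallest `φ`-stable subspace containing `K`: `U = Σ_{i ≥ 0} φ^i(K)`. -/
def bigU (φ : V →ₛₗ[frobenius k p] V) (K : Submodule k V) : Submodule k V :=
  ⨆ i : ℕ, iterMap φ K i

/-- The flag `U_m`: `U_m = φ^{-(σ₀-m)}(K) ∩ ⋯ ∩ φ^{-1}(K) ∩ K` for `m ≤ σ₀`, and
`U_m = K + φ(K) + ⋯ + φ^{m-σ₀}(K)` for `m ≥ σ₀` (so `U_{σ₀} = K`,
`U_{σ₀+1} = K + φ(K)`). -/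
def flagU (σ₀ : ℕ) (φ : V →ₛₗ[frobenius k p] V) (K : Submodule k V) (m : ℕ) : Submodule k V :=
  if m ≤ σ₀ then ⨅ i ∈ Finset.range (σ₀ - m + 1), iterComap φ K i
  else ⨆ i ∈ Finset.range (m - σ₀ + 1), iterMap φ K i

/-- A semilinear injection along the (bijective) Frobenius preserves finrank of submodules. -/
lemma finrank_map_semilinear (φ : V →ₛₗ[frobenius k p] V) (hinj : Function.Injective φ)
    (X : Submodule k V) : finrank k ↥(X.map φ) = finrank k ↥X := by
  let g : X →+ X.map φ :=
    { toFun := fun x => ⟨φ x, Submodule.mem_map_of_mem x.2⟩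
      map_zero' := by apply Subtype.ext; simp
      map_add' := fun x y => by apply Subtype.ext; simp }
  have hgbij : Function.Bijective g := by
    constructor
    · intro x y hxy
      exact Subtype.ext (hinj (congrArg Subtype.val hxy))
    · rintro ⟨-, x, hx, rfl⟩
      exact ⟨⟨x, hx⟩, rfl⟩
  have h := rank_eq_of_equiv_equiv (R := k) (R' := k) (M := X) (M₁ := ↥(X.map φ))
    (frobenius k p)
    (AddEquiv.ofBijective g hgbij)
    (bijective_frobenius k p)
    (fun r m => by
      apply Subtype.ext
      have h1 : ((AddEquiv.ofBijective g hgbij) (r • m) : V) = φ ((r • m : X) : V) := rfl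
      have h2 : ((AddEquiv.ofBijective g hgbij) m : V) = φ (m : V) := rfl
      simp only [h1, Submodule.coe_smul, SetLike.val_smul, h2, map_smulₛₗ])
  rw [Module.finrank, Module.finrank, h]

lemma flagU_self (σ₀ : ℕ) (φ : V →ₛₗ[frobenius k p] V) (K : Submodule k V) :
    flagU σ₀ φ K σ₀ = K := by
  rw [flagU, if_pos le_rfl, Nat.sub_self]
  simp [iterComap, Finset.mem_range, Nat.lt_one_iff]

lemma flagU_succ_self (σ₀ : ℕ) (φ : V →ₛₗ[frobenius k p] V) (K : Submodule k V) :
    flagU σ₀ φ K (σ₀ + 1) = K ⊔ Submodule.map φ K := by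
  rw [flagU, if_neg (by omega), show σ₀ + 1 - σ₀ + 1 = 2 by omega]
  rw [show (Finset.range 2) = {0, 1} from rfl]
  simp [iterMap, Finset.mem_insert, Finset.mem_singleton, iSup_or, iSup_sup_eq]

/-- The combinatorial convexity argument. -/
lemma combin (n : ℕ) (hn : 1 ≤ n) (f : ℕ → ℕ) (h0 : f 0 = 0)
    (hconv : ∀ m, 0 < m → m < 2 * n → 2 * f m ≤ f (m + 1) + f (m - 1))
    (htop : f (2 * n) < n) : f (n + 1) = 0 := by
  by_contra hne
  have hjump : ∃ j, j ≤ n ∧ f j < f (j + 1) := by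
    by_contra h
    push_neg at h
    have hz : ∀ j, j ≤ n + 1 → f j = 0 := by
      intro j hj
      induction j with
      | zero => exact h0
      | succ i ih =>
        have h1 := h i (by omega)
        have h2 := ih (by omega)
        omega
    exact hne (hz (n + 1) le_rfl)
  obtain ⟨j, hjn, hj⟩ := hjump
  have hstep : ∀ d, j + d < 2 * n → f (j + d) < f (j + d + 1) := by
    intro d
    induction d with
    | zero => intro _; simpa using hj
    | succ i ih =>
      intro hlt
      have h1 : f (j + i) < f (j + i + 1) := ih (by omega)
      have h2 := hconv (j + i + 1) (by omega) (by omega)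
      rw [show j + i + 1 - 1 = j + i from rfl] at h2
      show f (j + i + 1) < f (j + i + 1 + 1)
      omega
  have hstep' : ∀ m, j ≤ m → m < 2 * n → f m < f (m + 1) := by
    intro m hjm hm
    have := hstep (m - j) (by omega)
    rwa [Nat.add_sub_cancel' hjm] at this
  have hge : ∀ t, n + 1 + t ≤ 2 * n → f (n + 1) + t ≤ f (n + 1 + t) := by
    intro t
    induction t with
    | zero => intro _; simp
    | succ i ih =>
      intro h
      have h1 := hstep' (n + 1 + i) (by omega) (by omega)
      have h2 := ih (by omega)
      show f (n + 1) + (i + 1) ≤ f (n + 1 + i + 1)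
      omega
  have hfin := hge (n - 1) (by omega)
  rw [show n + 1 + (n - 1) = 2 * n by omega] at hfin
  omega


open TensorProduct

variable {p : ℕ} [Fact p.Prime]
  {k : Type*} [Field k] [IsAlgClosed k] [CharP k p] [Algebra (ZMod p) k]
  {N : Type*} [AddCommGroup N] [Module (ZMod p) N] [FiniteDimensional (ZMod p) N]

/-- The `F_p`-subspace `T ⊂ N` base-changed to `k`, viewed inside `N ⊗_{F_p} k`. -/
def baseChangeSub (T : Submodule (ZMod p) N) : Submodule k (k ⊗[ZMod p] N) :=
  Submodule.span k ((fun v : N => (1 : k) ⊗ₜ[ZMod p] v) '' (T : Set N))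

lemma one_tmul_ne_zero {v : N} (hv : v ≠ 0) : (1 : k) ⊗ₜ[ZMod p] v ≠ 0 := by
  intro h0
  let b := Module.Free.chooseBasis (ZMod p) N
  apply hv
  have hrepr : ∀ i, b.repr v i = 0 := by
    intro i
    have := Basis.baseChange_repr_tmul (S := k) b (1 : k) v i
    rw [h0, map_zero] at this
    have h1 : (b.repr v i) • (1 : k) = 0 := this.symm
    rw [← algebraMap_smul k (b.repr v i) (1 : k), smul_eq_mul, mul_one] at h1
    exact (RingHom.injective (algebraMap (ZMod p) k)) (by simpa using h1)
  have hz : b.repr v = 0 := Finsupp.ext hrepr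
  have hrv : b.repr v = b.repr 0 := by rw [hz, map_zero]
  exact b.repr.injective hrv

/-- if `dim_{F_p} T < σ₀` then `T ⊗ k → (N ⊗ k)/φ(K)` is injective, and
even the composite `T ⊗ k → (N ⊗ k)/(K + φ(K))` is injective; in particular for every
nonzero `v ∈ N` the image of `v ⊗ 1` in `(N ⊗ k)/φ(K)` is nonzero, and if `σ₀ ≥ 2` its
image in `(N ⊗ k)/(K + φ(K))` is also nonzero. -/
theorem chern_mod_p_injective
    (φ : (k ⊗[ZMod p] N) →ₛₗ[frobenius k p] (k ⊗[ZMod p] N))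
    (hφbij : Function.Bijective φ)
    (hφ : ∀ (c : k) (v : N), φ (c ⊗ₜ[ZMod p] v) = (c ^ p) ⊗ₜ[ZMod p] v)
    (σ₀ : ℕ) (hσ₀ : 1 ≤ σ₀) (K : Submodule k (k ⊗[ZMod p] N))
    (hK : finrank k K = σ₀)
    (hKφ : finrank k ↥(K ⊔ Submodule.map φ K) = σ₀ + 1)
    (hU : finrank k ↥(bigU φ K) = 2 * σ₀)
    (hflag : ∀ m : ℕ, m ≤ 2 * σ₀ → finrank k ↥(flagU σ₀ φ K m) = m)
    (hrec1 : ∀ m : ℕ, 0 < m → m < 2 * σ₀ →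
      flagU σ₀ φ K (m + 1) = flagU σ₀ φ K m ⊔ Submodule.map φ (flagU σ₀ φ K m))
    (hrec2 : ∀ m : ℕ, 0 < m → m < 2 * σ₀ →
      Submodule.map φ (flagU σ₀ φ K (m - 1)) =
        flagU σ₀ φ K m ⊓ Submodule.map φ (flagU σ₀ φ K m)) :
    (∀ T : Submodule (ZMod p) N, finrank (ZMod p) T < σ₀ →
      Function.Injective (fun t : ↥(baseChangeSub T) =>
        (Submodule.map φ K).mkQ t.1) ∧
      Function.Injective (fun t : ↥(baseChangeSub T) =>
        (K ⊔ Submodule.map φ K).mkQ t.1)) ∧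
    (∀ v : N, v ≠ 0 → (Submodule.map φ K).mkQ ((1 : k) ⊗ₜ[ZMod p] v) ≠ 0) ∧
    (2 ≤ σ₀ → ∀ v : N, v ≠ 0 → (K ⊔ Submodule.map φ K).mkQ ((1 : k) ⊗ₜ[ZMod p] v) ≠ 0) := by
  classical
  have hinj := hφbij.injective
  set U : ℕ → Submodule k (k ⊗[ZMod p] N) := flagU σ₀ φ K with hUdef
  have hUσ : U σ₀ = K := flagU_self σ₀ φ K
  have hUσ1 : U (σ₀ + 1) = K ⊔ Submodule.map φ K := flagU_succ_self σ₀ φ K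
  -- main injectivity statement
  have main : ∀ T : Submodule (ZMod p) N, finrank (ZMod p) T < σ₀ →
      (baseChangeSub T) ⊓ (K ⊔ Submodule.map φ K) = ⊥ := by
    intro T hT
    set A := (baseChangeSub T : Submodule k (k ⊗[ZMod p] N)) with hAdef
    have hAle : finrank k ↥A ≤ finrank (ZMod p) T := by
      have hle : A ≤ LinearMap.range (T.subtype.baseChange k) := by
        rw [hAdef, baseChangeSub, Submodule.span_le]
        rintro x ⟨v, hv, rfl⟩
        exact ⟨(1 : k) ⊗ₜ[ZMod p] (⟨v, hv⟩ : T), by simp⟩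
      calc finrank k ↥A ≤ finrank k ↥(LinearMap.range (T.subtype.baseChange k)) :=
            Submodule.finrank_mono hle
        _ ≤ finrank k (k ⊗[ZMod p] T) := (T.subtype.baseChange k).finrank_range_le
        _ = finrank (ZMod p) T := Module.finrank_baseChange
    have hAphi : Submodule.map φ A = A := by
      rw [hAdef, baseChangeSub, Submodule.map_span]
      congr 1
      rw [Set.image_image]
      apply Set.image_congr
      intro v _
      rw [hφ, one_pow]
    have h0 : finrank k ↥(A ⊓ U 0) = 0 := by
      have h1 := Submodule.finrank_mono (inf_le_right : A ⊓ U 0 ≤ U 0)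
      have h2 := hflag 0 (by omega)
      omega
    have hconv : ∀ m, 0 < m → m < 2 * σ₀ →
        2 * finrank k ↥(A ⊓ U m) ≤ finrank k ↥(A ⊓ U (m + 1)) + finrank k ↥(A ⊓ U (m - 1)) := by
      intro m hm0 hm2
      have hXmap : Submodule.map φ (A ⊓ U m) = A ⊓ Submodule.map φ (U m) := by
        rw [Submodule.map_inf _ hinj, hAphi]
      have hsub : (A ⊓ U m) ⊔ Submodule.map φ (A ⊓ U m) ≤ A ⊓ U (m + 1) := by
        rw [hXmap, hrec1 m hm0 hm2]
        exact sup_le (le_inf inf_le_left (inf_le_right.trans le_sup_left))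
          (le_inf inf_le_left (inf_le_right.trans le_sup_right))
      have hint : (A ⊓ U m) ⊓ Submodule.map φ (A ⊓ U m) = Submodule.map φ (A ⊓ U (m - 1)) := by
        rw [hXmap, Submodule.map_inf _ hinj, hAphi, hrec2 m hm0 hm2]
        rw [inf_inf_inf_comm, inf_idem]
      have e1 := Submodule.finrank_sup_add_finrank_inf_eq (A ⊓ U m) (Submodule.map φ (A ⊓ U m))
      have e2 : finrank k ↥(Submodule.map φ (A ⊓ U m)) = finrank k ↥(A ⊓ U m) :=
        finrank_map_semilinear φ hinj _
      have e3 : finrank k ↥((A ⊓ U m) ⊓ Submodule.map φ (A ⊓ U m)) = finrank k ↥(A ⊓ U (m - 1)) := by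
        rw [hint, finrank_map_semilinear φ hinj]
      have e4 : finrank k ↥((A ⊓ U m) ⊔ Submodule.map φ (A ⊓ U m)) ≤ finrank k ↥(A ⊓ U (m + 1)) :=
        Submodule.finrank_mono hsub
      omega
    have htop : finrank k ↥(A ⊓ U (2 * σ₀)) < σ₀ :=
      lt_of_le_of_lt (le_trans (Submodule.finrank_mono inf_le_left) hAle) hT
    have hzero : finrank k ↥(A ⊓ U (σ₀ + 1)) = 0 :=
      combin σ₀ hσ₀ (fun m => finrank k ↥(A ⊓ U m)) h0 hconv htop
    have hbot : A ⊓ U (σ₀ + 1) = ⊥ := Submodule.finrank_eq_zero.mp hzero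
    rwa [hUσ1] at hbot
  refine ⟨?_, ?_, ?_⟩
  · -- injectivity statements
    intro T hT
    have hbot := main T hT
    constructor
    · intro t s hts
      have hmem : (t : k ⊗[ZMod p] N) - s ∈ Submodule.map φ K :=
        (Submodule.Quotient.eq _).mp hts
      have hmem2 : (t : k ⊗[ZMod p] N) - s ∈ K ⊔ Submodule.map φ K :=
        Submodule.mem_sup_right hmem
      have : (t : k ⊗[ZMod p] N) - s ∈ (⊥ : Submodule k (k ⊗[ZMod p] N)) := by
        rw [← hbot]; exact ⟨sub_mem t.2 s.2, hmem2⟩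
      exact Subtype.ext (sub_eq_zero.mp (by simpa using this))
    · intro t s hts
      have hmem : (t : k ⊗[ZMod p] N) - s ∈ K ⊔ Submodule.map φ K :=
        (Submodule.Quotient.eq _).mp hts
      have : (t : k ⊗[ZMod p] N) - s ∈ (⊥ : Submodule k (k ⊗[ZMod p] N)) := by
        rw [← hbot]; exact ⟨sub_mem t.2 s.2, hmem⟩
      exact Subtype.ext (sub_eq_zero.mp (by simpa using this))
  · -- fixed point argument mod φK
    intro v hv h
    have hfix : φ ((1 : k) ⊗ₜ[ZMod p] v) = (1 : k) ⊗ₜ[ZMod p] v := by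
      rw [hφ, one_pow]
    have hmem : (1 : k) ⊗ₜ[ZMod p] v ∈ Submodule.map φ K := by
      rwa [Submodule.mkQ_apply, Submodule.Quotient.mk_eq_zero] at h
    have hdesc : ∀ m, m ≤ σ₀ → (1 : k) ⊗ₜ[ZMod p] v ∈ Submodule.map φ (U m) → False := by
      intro m
      induction m with
      | zero =>
        intro _ hm
        have hU0 : U 0 = ⊥ := Submodule.finrank_eq_zero.mp (hflag 0 (by omega))
        rw [hU0, Submodule.map_bot, Submodule.mem_bot] at hm
        exact one_tmul_ne_zero hv hm
      | succ i ih =>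
        intro hle hm
        obtain ⟨y, hy, hyi⟩ := hm
        have hyx : y = (1 : k) ⊗ₜ[ZMod p] v := hinj (by rw [hyi, hfix])
        rw [hyx] at hy
        have hx2 : (1 : k) ⊗ₜ[ZMod p] v ∈ Submodule.map φ (U (i + 1)) := ⟨_, hy, hfix⟩
        have hr := hrec2 (i + 1) (by omega) (by omega)
        rw [show i + 1 - 1 = i from rfl] at hr
        exact ih (by omega) (by rw [hr]; exact ⟨hy, hx2⟩)
    exact hdesc σ₀ le_rfl (by rwa [hUσ])
  · -- image in (N⊗k)/(K+φK) nonzero for σ₀ ≥ 2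
    intro h2 v hv h
    have hT : finrank (ZMod p) (Submodule.span (ZMod p) {v}) < σ₀ := by
      rw [finrank_span_singleton hv]; omega
    have hmemT : (1 : k) ⊗ₜ[ZMod p] v ∈ baseChangeSub (Submodule.span (ZMod p) {v}) :=
      Submodule.subset_span ⟨v, Submodule.mem_span_singleton_self v, rfl⟩
    have hbot := main _ hT
    have : (1 : k) ⊗ₜ[ZMod p] v ∈ (⊥ : Submodule k (k ⊗[ZMod p] N)) := by
      rw [← hbot]
      refine ⟨hmemT, ?_⟩
      rwa [Submodule.mkQ_apply, Submodule.Quotient.mk_eq_zero] at h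
    exact one_tmul_ne_zero hv ((Submodule.mem_bot k).mp this)
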